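/- arXiv:1605.05783 — 2 statements merged into one kernel-verified Lean document; each statement's English description precedes it below -/
import Mathlib

section
/- Let g = {g_0,…,g_m} be forms of degree d in k[x_0,…,x_n] satisfying the canonical restrictions, with Newton dual set ĝ. Then ĝ also satisfies the canonical restrictions: gcd(ĝ_0,…,ĝ_m) = 1 and every variable x_i occurs in some monomial of some ĝ_j. Moreover the directrix vector of ĝ equals the directrix vector β of g, and the dual of ĝ is g. -/
open MvPolynomial Finset

/-- Newton complementary dual of `g` relative to a given directrix vector `β`. -/
noncomputable def newtonDualWith {k : Type*} [CommSemiring k] {N : ℕ}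
    (β : Fin N → ℕ) (g : MvPolynomial (Fin N) k) : MvPolynomial (Fin N) k :=
  ∑ a ∈ g.support,
    monomial (Finsupp.equivFunOnFinite.symm fun i => β i - a i) (coeff a g)

/-- Newton complementary dual of a single form: directrix vector `β i = degreeOf i g`. -/
noncomputable def newtonDual {k : Type*} [CommSemiring k] {N : ℕ}
    (g : MvPolynomial (Fin N) k) : MvPolynomial (Fin N) k :=
  newtonDualWith (fun i => g.degreeOf i) g

/-- The `i`-th coordinate of the Magnus reciprocal involution: `∏_{j ≠ i} x_j`. -/
noncomputable def magnus (k : Type*) [CommSemiring k] (N : ℕ) (i : Fin N) :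
    MvPolynomial (Fin N) k :=
  ∏ j ∈ Finset.univ.erase i, X j

namespace NewtonAux

variable {k : Type*} {N : ℕ}

/-- exponent reflection -/
noncomputable def refl (β : Fin N → ℕ) (a : Fin N →₀ ℕ) : Fin N →₀ ℕ :=
  Finsupp.equivFunOnFinite.symm fun i => β i - a i

@[simp] lemma refl_apply (β : Fin N → ℕ) (a : Fin N →₀ ℕ) (i : Fin N) :
    refl β a i = β i - a i := rfl

lemma refl_refl {β : Fin N → ℕ} {a : Fin N →₀ ℕ} (h : ∀ i, a i ≤ β i) :
    refl β (refl β a) = a := by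
  ext i; simp [Nat.sub_sub_self (h i)]

variable [CommSemiring k]

lemma newtonDualWith_eq (β : Fin N → ℕ) (h : MvPolynomial (Fin N) k) :
    newtonDualWith β h = ∑ a ∈ h.support, monomial (refl β a) (coeff a h) := rfl

lemma coeff_dual {β : Fin N → ℕ} {h : MvPolynomial (Fin N) k}
    (hs : ∀ a ∈ h.support, ∀ i, a i ≤ β i) {b : Fin N →₀ ℕ} (hb : ∀ i, b i ≤ β i) :
    coeff (refl β b) (newtonDualWith β h) = coeff b h := by
  classical
  rw [newtonDualWith_eq, coeff_sum]
  simp_rw [coeff_monomial]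
  by_cases hbm : b ∈ h.support
  · rw [Finset.sum_eq_single_of_mem b hbm (fun a ha hne => ?_), if_pos rfl]
    rw [if_neg]
    intro hab
    exact hne (by rw [← refl_refl (hs a ha), hab, refl_refl hb])
  · rw [MvPolynomial.notMem_support_iff.mp hbm, Finset.sum_eq_zero]
    intro a ha
    rw [if_neg]
    intro hab
    have : a = b := by rw [← refl_refl (hs a ha), hab, refl_refl hb]
    exact hbm (this ▸ ha)

lemma support_dual {β : Fin N → ℕ} {h : MvPolynomial (Fin N) k}
    (hs : ∀ a ∈ h.support, ∀ i, a i ≤ β i) :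
    (newtonDualWith β h).support = h.support.image (refl β) := by
  classical
  apply Finset.Subset.antisymm
  · refine (newtonDualWith_eq β h ▸ MvPolynomial.support_sum).trans ?_
    intro b hb
    obtain ⟨a, ha, hb⟩ := Finset.mem_biUnion.mp hb
    have := MvPolynomial.support_monomial_subset hb
    rw [Finset.mem_singleton] at this
    exact Finset.mem_image.mpr ⟨a, ha, this.symm⟩
  · intro b hb
    obtain ⟨a, ha, rfl⟩ := Finset.mem_image.mp hb
    rw [MvPolynomial.mem_support_iff, coeff_dual hs (hs a ha)]
    exact MvPolynomial.mem_support_iff.mp ha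

lemma dual_ne_zero {β : Fin N → ℕ} {h : MvPolynomial (Fin N) k}
    (hs : ∀ a ∈ h.support, ∀ i, a i ≤ β i) (hne : h ≠ 0) :
    newtonDualWith β h ≠ 0 := by
  rw [← MvPolynomial.support_nonempty, support_dual hs]
  exact (MvPolynomial.support_nonempty.mpr hne).image _

lemma dual_dual {β : Fin N → ℕ} {h : MvPolynomial (Fin N) k}
    (hs : ∀ a ∈ h.support, ∀ i, a i ≤ β i) :
    newtonDualWith β (newtonDualWith β h) = h := by
  classical
  have hs' : ∀ b ∈ (newtonDualWith β h).support, ∀ i, b i ≤ β i := by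
    rw [support_dual hs]
    intro b hb i
    obtain ⟨a, _, rfl⟩ := Finset.mem_image.mp hb
    simpa using Nat.sub_le _ _
  ext b
  by_cases hbm : b ∈ h.support
  · have hb := hs b hbm
    calc coeff b (newtonDualWith β (newtonDualWith β h))
        = coeff (refl β (refl β b)) (newtonDualWith β (newtonDualWith β h)) := by
          rw [refl_refl hb]
      _ = coeff (refl β b) (newtonDualWith β h) := coeff_dual hs' (fun i => Nat.sub_le _ _)
      _ = coeff b h := coeff_dual hs hb
  · rw [MvPolynomial.notMem_support_iff.mp hbm, ← MvPolynomial.notMem_support_iff]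
    intro hmem
    rw [support_dual hs', support_dual hs, Finset.image_image] at hmem
    obtain ⟨a, ha, rfl⟩ := Finset.mem_image.mp hmem
    exact hbm (by rw [Function.comp_apply, refl_refl (hs a ha)]; exact ha)

lemma dual_shift {β β' : Fin N → ℕ} {h : MvPolynomial (Fin N) k}
    (hs : ∀ a ∈ h.support, ∀ i, a i ≤ β i) (hββ' : ∀ i, β i ≤ β' i) :
    newtonDualWith β' h =
      monomial (Finsupp.equivFunOnFinite.symm fun i => β' i - β i) 1 * newtonDualWith β h := by
  rw [newtonDualWith_eq, newtonDualWith_eq, Finset.mul_sum]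
  refine Finset.sum_congr rfl fun a ha => ?_
  rw [monomial_mul, one_mul]
  rw [show (Finsupp.equivFunOnFinite.symm fun i => β' i - β i) + refl β a = refl β' a by
    ext i
    have h1 := hs a ha i
    have h2 := hββ' i
    simp only [Finsupp.add_apply, refl_apply]
    change (β' i - β i) + (β i - a i) = β' i - a i
    omega]

end NewtonAux

namespace NewtonAux

variable {k : Type*} {N : ℕ}

section CommSemiringB
variable [CommSemiring k]

lemma prod_X_pow (c : Fin N → ℕ) :
    (∏ j, (X j : MvPolynomial (Fin N) k) ^ c j)
      = monomial (Finsupp.equivFunOnFinite.symm c) 1 := by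
  rw [monomial_eq, C_1, one_mul, Finsupp.prod_fintype _ _ (fun i => pow_zero _)]
  rfl

/-- Substitution sending `X i` to `0`. -/
noncomputable def killVar (i : Fin N) : MvPolynomial (Fin N) k →ₐ[k] MvPolynomial (Fin N) k :=
  aeval (fun j => if j = i then (0 : MvPolynomial (Fin N) k) else X j)

lemma killVar_monomial_of_ne (i : Fin N) (a : Fin N →₀ ℕ) (c : k) (ha : a i = 0) :
    killVar i (monomial a c) = monomial a c := by
  classical
  rw [killVar, aeval_monomial]
  have : (a.prod fun j e => (if j = i then (0 : MvPolynomial (Fin N) k) else X j) ^ e)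
      = a.prod fun j e => (X j : MvPolynomial (Fin N) k) ^ e := by
    refine Finset.prod_congr rfl fun j hj => ?_
    have hji : j ≠ i := fun h => by
      subst h; exact (Finsupp.mem_support_iff.mp hj) ha
    show (if j = i then (0 : MvPolynomial (Fin N) k) else X j) ^ a j = (X j : MvPolynomial (Fin N) k) ^ a j
    rw [if_neg hji]
  rw [this, algebraMap_eq, ← monomial_eq]

lemma killVar_monomial_of_mem (i : Fin N) (a : Fin N →₀ ℕ) (c : k) (ha : a i ≠ 0) :
    killVar i (monomial a c) = 0 := by
  classical
  rw [killVar, aeval_monomial]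
  have : (a.prod fun j e => (if j = i then (0 : MvPolynomial (Fin N) k) else X j) ^ e) = 0 := by
    refine Finset.prod_eq_zero (Finsupp.mem_support_iff.mpr ha) ?_
    show (if i = i then (0 : MvPolynomial (Fin N) k) else X i) ^ a i = 0
    rw [if_pos rfl, zero_pow ha]
  rw [this, mul_zero]

lemma killVar_eq_sum (i : Fin N) (p : MvPolynomial (Fin N) k) :
    killVar i p
      = ∑ a ∈ p.support, if a i = 0 then monomial a (coeff a p) else 0 := by
  classical
  conv_lhs => rw [p.as_sum]
  rw [map_sum]
  refine Finset.sum_congr rfl fun a ha => ?_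
  by_cases h : a i = 0
  · rw [if_pos h, killVar_monomial_of_ne i a _ h]
  · rw [if_neg h, killVar_monomial_of_mem i a _ h]

lemma coeff_killVar (i : Fin N) (p : MvPolynomial (Fin N) k) {b : Fin N →₀ ℕ} (hb : b i = 0) :
    coeff b (killVar i p) = coeff b p := by
  classical
  rw [killVar_eq_sum, coeff_sum]
  by_cases hbm : b ∈ p.support
  · rw [Finset.sum_eq_single_of_mem b hbm (fun a ha hne => ?_), if_pos hb, coeff_monomial,
      if_pos rfl]
    by_cases h : a i = 0
    · rw [if_pos h, coeff_monomial, if_neg hne]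
    · rw [if_neg h, coeff_zero]
  · rw [MvPolynomial.notMem_support_iff.mp hbm, Finset.sum_eq_zero]
    intro a ha
    by_cases h : a i = 0
    · rw [if_pos h, coeff_monomial, if_neg (fun (hab : a = b) => hbm (hab ▸ ha))]
    · rw [if_neg h, coeff_zero]

lemma X_dvd_of_support (i : Fin N) {p : MvPolynomial (Fin N) k}
    (h : ∀ a ∈ p.support, a i ≠ 0) : (X i : MvPolynomial (Fin N) k) ∣ p := by
  conv_rhs => rw [p.as_sum]
  refine Finset.dvd_sum fun a ha => ?_
  exact X_dvd_monomial.mpr (Or.inr (h a ha))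

lemma not_X_dvd_of_exists (i : Fin N) {p : MvPolynomial (Fin N) k} [Nontrivial k]
    {a : Fin N →₀ ℕ} (ha : a ∈ p.support) (hai : a i = 0) :
    ¬ (X i : MvPolynomial (Fin N) k) ∣ p := by
  rintro ⟨w, rfl⟩
  rw [MvPolynomial.mem_support_iff] at ha
  classical
  rw [coeff_X_mul' a i w, if_neg (by simp [Finsupp.mem_support_iff, hai])] at ha
  exact ha rfl

end CommSemiringB

section DomainB
variable [CommRing k] [IsDomain k]

lemma X_dvd_of_killVar (i : Fin N) {p : MvPolynomial (Fin N) k}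
    (h : killVar i p = 0) :
    (X i : MvPolynomial (Fin N) k) ∣ p := by
  refine X_dvd_of_support i fun a ha hai => ?_
  have := coeff_killVar i p hai
  rw [h, coeff_zero] at this
  exact (MvPolynomial.mem_support_iff.mp ha) this.symm

lemma killVar_of_X_dvd (i : Fin N) {p : MvPolynomial (Fin N) k}
    (h : (X i : MvPolynomial (Fin N) k) ∣ p) :
    killVar i p = 0 := by
  obtain ⟨w, rfl⟩ := h
  have hX : killVar (k := k) i (X i) = 0 := by rw [killVar, aeval_X, if_pos rfl]
  rw [map_mul, hX, zero_mul]

lemma prime_X (i : Fin N) : Prime (X i : MvPolynomial (Fin N) k) := by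
  refine ⟨X_ne_zero i, fun hu => ?_, fun a b hab => ?_⟩
  · have hdvd : (X i : MvPolynomial (Fin N) k) ∣ 1 := hu.dvd
    have := killVar_of_X_dvd i hdvd
    rw [map_one] at this
    exact one_ne_zero this
  · have := killVar_of_X_dvd i hab
    rw [map_mul] at this
    rcases mul_eq_zero.mp this with h | h
    · exact Or.inl (X_dvd_of_killVar i h)
    · exact Or.inr (X_dvd_of_killVar i h)

lemma dvd_of_dvd_prime_mul {r q w : MvPolynomial (Fin N) k}
    (hr : Prime r) (hrq : ¬ r ∣ q) (h : q ∣ r * w) : q ∣ w := by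
  obtain ⟨s, hs⟩ := h
  have hrqs : r ∣ q * s := ⟨w, hs.symm⟩
  rcases (hr.2.2 _ _ hrqs).resolve_left hrq with ⟨t, rfl⟩
  exact ⟨t, mul_left_cancel₀ hr.1 (hs.trans (by ring))⟩

lemma dvd_of_dvd_pow_mul {r q : MvPolynomial (Fin N) k}
    (hr : Prime r) (hrq : ¬ r ∣ q) :
    ∀ (e : ℕ) (w : MvPolynomial (Fin N) k), q ∣ r ^ e * w → q ∣ w := by
  intro e
  induction e with
  | zero => intro w h; rwa [pow_zero, one_mul] at h
  | succ e ih =>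
    intro w h
    rw [pow_succ, mul_comm (r ^ e) r, mul_assoc] at h
    exact ih w (dvd_of_dvd_prime_mul hr hrq h)

lemma dvd_of_dvd_monomial_mul {q w : MvPolynomial (Fin N) k} {v : Fin N →₀ ℕ}
    (hq : ∀ i, ¬ (X i : MvPolynomial (Fin N) k) ∣ q)
    (h : q ∣ monomial v (1 : k) * w) : q ∣ w := by
  classical
  have hv : monomial v (1 : k) = ∏ i, (X i : MvPolynomial (Fin N) k) ^ v i := by
    rw [prod_X_pow, Finsupp.equivFunOnFinite_symm_coe]
  rw [hv] at h
  have : ∀ (s : Finset (Fin N)) (w : MvPolynomial (Fin N) k),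
      q ∣ (∏ i ∈ s, (X i : MvPolynomial (Fin N) k) ^ v i) * w → q ∣ w := by
    intro s
    induction s using Finset.induction_on with
    | empty => intro w h; rwa [Finset.prod_empty, one_mul] at h
    | insert i s hni ih =>
      intro w h
      rw [Finset.prod_insert hni, mul_assoc] at h
      exact ih _ (dvd_of_dvd_pow_mul (prime_X i) (hq i) _ _ h)
  exact this Finset.univ w h

end DomainB

end NewtonAux

namespace NewtonAux

variable {k : Type*} {N : ℕ}

section DomainC
variable [CommRing k] [IsDomain k]

local notation "hc" => homogeneousComponent

lemma degree_eq_sum (d : Fin N →₀ ℕ) : d.degree = ∑ i, d i :=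
  Finset.sum_subset (Finset.subset_univ _) fun i _ hi => Finsupp.notMem_support_iff.mp hi

lemma totalDegree_eq_sup_degree (p : MvPolynomial (Fin N) k) :
    p.totalDegree = p.support.sup Finsupp.degree := rfl

/-- the bottom degree -/
noncomputable def botDegree (p : MvPolynomial (Fin N) k) : ℕ :=
  sInf (Finsupp.degree '' {a | a ∈ p.support})

lemma botDegree_le_degree {p : MvPolynomial (Fin N) k} {a : Fin N →₀ ℕ} (ha : a ∈ p.support) :
    botDegree p ≤ a.degree := Nat.sInf_le ⟨a, ha, rfl⟩

lemma botDegree_le_totalDegree {p : MvPolynomial (Fin N) k} (hp : p ≠ 0) :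
    botDegree p ≤ p.totalDegree := by
  obtain ⟨a, ha⟩ := MvPolynomial.support_nonempty.mpr hp
  exact le_trans (botDegree_le_degree ha) (MvPolynomial.le_totalDegree ha)

lemma hc_totalDegree_ne_zero {p : MvPolynomial (Fin N) k} (hp : p ≠ 0) :
    hc p.totalDegree p ≠ 0 := by
  obtain ⟨a, ha, hd⟩ := Finset.exists_mem_eq_sup p.support
    (MvPolynomial.support_nonempty.mpr hp) Finsupp.degree
  intro h0
  have := coeff_homogeneousComponent (σ := Fin N) (R := k) p.totalDegree p a
  rw [h0, coeff_zero, if_pos ((totalDegree_eq_sup_degree p).symm ▸ hd.symm)] at this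
  exact (MvPolynomial.mem_support_iff.mp ha) this.symm

lemma hc_botDegree_ne_zero {p : MvPolynomial (Fin N) k} (hp : p ≠ 0) :
    hc (botDegree p) p ≠ 0 := by
  have hne : (Finsupp.degree '' {a | a ∈ p.support}).Nonempty := by
    obtain ⟨a, ha⟩ := MvPolynomial.support_nonempty.mpr hp
    exact ⟨a.degree, a, ha, rfl⟩
  obtain ⟨a, ha, hd⟩ := Nat.sInf_mem hne
  intro h0
  have := coeff_homogeneousComponent (σ := Fin N) (R := k) (botDegree p) p a
  rw [h0, coeff_zero, if_pos (show a.degree = botDegree p from hd)] at this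
  exact (MvPolynomial.mem_support_iff.mp ha) this.symm

lemma hc_eq_zero_of_lt_bot {p : MvPolynomial (Fin N) k} {e : ℕ} (he : e < botDegree p) :
    hc e p = 0 := by
  refine homogeneousComponent_eq_zero' e p fun a ha h => ?_
  exact absurd (h ▸ botDegree_le_degree ha) (by omega)

lemma hc_mul_decomp (p q : MvPolynomial (Fin N) k) (M : ℕ) :
    hc M (p * q) = ∑ u ∈ Finset.range (p.totalDegree + 1),
      ∑ v ∈ Finset.range (q.totalDegree + 1),
        if M = u + v then hc u p * hc v q else 0 := by
  classical
  have hpq : p * q = ∑ u ∈ Finset.range (p.totalDegree + 1),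
      ∑ v ∈ Finset.range (q.totalDegree + 1), hc u p * hc v q := by
    rw [← Finset.sum_mul_sum, sum_homogeneousComponent, sum_homogeneousComponent]
  rw [hpq, map_sum]
  refine Finset.sum_congr rfl fun u hu => ?_
  rw [map_sum]
  refine Finset.sum_congr rfl fun v hv => ?_
  have hmem : hc u p * hc v q ∈ homogeneousSubmodule (Fin N) k (u + v) := by
    rw [mem_homogeneousSubmodule]
    exact (homogeneousComponent_isHomogeneous u p).mul (homogeneousComponent_isHomogeneous v q)
  exact homogeneousComponent_of_mem hmem

lemma top_eq_of_homog {p q : MvPolynomial (Fin N) k} {n : ℕ}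
    (hp : p ≠ 0) (hq : q ≠ 0) (hpq : (p * q).IsHomogeneous n) :
    p.totalDegree + q.totalDegree = n := by
  by_contra hne
  have h1 : hc (p.totalDegree + q.totalDegree) (p * q) ≠ 0 := by
    rw [hc_mul_decomp]
    rw [Finset.sum_eq_single_of_mem p.totalDegree (Finset.self_mem_range_succ _)
      (fun b hb hbne => Finset.sum_eq_zero fun v hv => if_neg (by
        rw [Finset.mem_range] at hb hv; omega))]
    rw [Finset.sum_eq_single_of_mem q.totalDegree (Finset.self_mem_range_succ _)
      (fun b hb hbne => if_neg (by rw [Finset.mem_range] at hb; omega))]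
    rw [if_pos rfl]
    exact mul_ne_zero (hc_totalDegree_ne_zero hp) (hc_totalDegree_ne_zero hq)
  have h2 : hc (p.totalDegree + q.totalDegree) (p * q) = 0 := by
    rw [homogeneousComponent_of_mem ((mem_homogeneousSubmodule _ _).mpr hpq), if_neg hne]
  exact h1 h2

lemma bot_eq_of_homog {p q : MvPolynomial (Fin N) k} {n : ℕ}
    (hp : p ≠ 0) (hq : q ≠ 0) (hpq : (p * q).IsHomogeneous n) :
    botDegree p + botDegree q = n := by
  by_contra hne
  have h1 : hc (botDegree p + botDegree q) (p * q) ≠ 0 := by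
    rw [hc_mul_decomp]
    rw [Finset.sum_eq_single_of_mem (botDegree p)
      (Finset.mem_range.mpr (Nat.lt_succ_of_le (botDegree_le_totalDegree hp)))
      (fun b hb hbne => Finset.sum_eq_zero fun v hv => ?_)]
    · rw [Finset.sum_eq_single_of_mem (botDegree q)
        (Finset.mem_range.mpr (Nat.lt_succ_of_le (botDegree_le_totalDegree hq)))
        (fun b hb hbne => ?_)]
      · rw [if_pos rfl]
        exact mul_ne_zero (hc_botDegree_ne_zero hp) (hc_botDegree_ne_zero hq)
      · by_cases hcond : botDegree p + botDegree q = botDegree p + b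
        · rw [if_pos hcond, hc_eq_zero_of_lt_bot (p := q) (by omega), mul_zero]
        · rw [if_neg hcond]
    · by_cases hcond : botDegree p + botDegree q = b + v
      · rcases Nat.lt_or_ge b (botDegree p) with hlt | hge
        · rw [if_pos hcond, hc_eq_zero_of_lt_bot (p := p) hlt, zero_mul]
        · rw [if_pos hcond, hc_eq_zero_of_lt_bot (p := q) (by omega), mul_zero]
      · rw [if_neg hcond]
  have h2 : hc (botDegree p + botDegree q) (p * q) = 0 := by
    rw [homogeneousComponent_of_mem ((mem_homogeneousSubmodule _ _).mpr hpq), if_neg hne]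
  exact h1 h2

lemma isHomogeneous_of_dvd {h p : MvPolynomial (Fin N) k} {n : ℕ}
    (hh : h.IsHomogeneous n) (hne : h ≠ 0) (hdvd : p ∣ h) :
    p.IsHomogeneous p.totalDegree := by
  obtain ⟨q, rfl⟩ := hdvd
  have hp : p ≠ 0 := fun h0 => hne (by rw [h0, zero_mul])
  have hq : q ≠ 0 := fun h0 => hne (by rw [h0, mul_zero])
  have htop := top_eq_of_homog hp hq hh
  have hbot := bot_eq_of_homog hp hq hh
  have hpl := botDegree_le_totalDegree hp
  have hql := botDegree_le_totalDegree hq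
  have heq : botDegree p = p.totalDegree := by omega
  intro a ha
  have hmem : a ∈ p.support := MvPolynomial.mem_support_iff.mpr ha
  have h1 : a.degree ≤ p.totalDegree := MvPolynomial.le_totalDegree hmem
  have h2 : p.totalDegree ≤ a.degree := heq ▸ botDegree_le_degree hmem
  have : a.degree = p.totalDegree := le_antisymm h1 h2
  rwa [show (1 : Fin N → ℕ) = fun _ => 1 from rfl, ← Finsupp.degree_eq_weight_one]

end DomainC

end NewtonAux

namespace NewtonAux

variable {k : Type*} {N : ℕ}

section CommSemiringD
variable [CommSemiring k]

lemma aeval_magnus_monomial (a : Fin N →₀ ℕ) (c : k) :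
    aeval (magnus k N) (monomial a c)
      = monomial (Finsupp.equivFunOnFinite.symm fun i => a.degree - a i) c := by
  classical
  rw [aeval_monomial, Finsupp.prod_fintype _ _ (fun i => pow_zero _)]
  have key : (∏ i, magnus k N i ^ a i)
      = ∏ j : Fin N, (X j : MvPolynomial (Fin N) k) ^ (a.degree - a j) := by
    have h1 : ∀ i : Fin N, magnus k N i ^ a i
        = ∏ j ∈ Finset.univ.erase i, (X j : MvPolynomial (Fin N) k) ^ a i := by
      intro i; rw [magnus, ← Finset.prod_pow]
    simp_rw [h1]
    rw [Finset.prod_comm' (t' := Finset.univ) (s' := fun j => Finset.univ.erase j)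
      (fun x y => by
        simp only [Finset.mem_univ, Finset.mem_erase, true_and, and_true, ne_eq]
        exact ⟨fun h e => h e.symm, fun h e => h e.symm⟩)]
    refine Finset.prod_congr rfl fun j _ => ?_
    rw [Finset.prod_pow_eq_pow_sum]
    congr 1
    have h2 : (∑ i ∈ Finset.univ.erase j, a i) + a j = ∑ i, a i :=
      Finset.sum_erase_add Finset.univ (⇑a) (Finset.mem_univ j)
    rw [degree_eq_sum]
    omega
  rw [key, prod_X_pow, algebraMap_eq, C_mul_monomial, mul_one]

lemma aeval_magnus_homog {h : MvPolynomial (Fin N) k} {e : ℕ} (hh : h.IsHomogeneous e) :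
    aeval (magnus k N) h = newtonDualWith (fun _ => e) h := by
  conv_lhs => rw [h.as_sum]
  rw [map_sum, newtonDualWith_eq]
  refine Finset.sum_congr rfl fun a ha => ?_
  rw [aeval_magnus_monomial]
  have hdeg : a.degree = e := by
    have := hh (MvPolynomial.mem_support_iff.mp ha)
    rwa [show (1 : Fin N → ℕ) = fun _ => 1 from rfl, ← Finsupp.degree_eq_weight_one] at this
  rw [hdeg]
  rfl

end CommSemiringD

end NewtonAux

theorem newtonDualSet_canonical_restrictions {k : Type*} [Field k] {n m d : ℕ}
    (hn : 1 ≤ n) (hd : 1 ≤ d)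
    (g : Fin (m + 1) → MvPolynomial (Fin (n + 1)) k)
    (hne : ∀ j, g j ≠ 0) (hhom : ∀ j, (g j).IsHomogeneous d)
    -- canonical restrictions on g: trivial gcd and every variable occurs
    (hgcd : ∀ p : MvPolynomial (Fin (n + 1)) k, (∀ j, p ∣ g j) → IsUnit p)
    (hvar : ∀ i, ∃ j, (g j).degreeOf i ≠ 0)
    (β : Fin (n + 1) → ℕ)
    (hβ : ∀ i, β i = Finset.univ.sup fun j => (g j).degreeOf i) :
    -- the dual set satisfies the canonical restrictions
    (∀ p : MvPolynomial (Fin (n + 1)) k,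
        (∀ j, p ∣ newtonDualWith β (g j)) → IsUnit p) ∧
    (∀ i, ∃ j, (newtonDualWith β (g j)).degreeOf i ≠ 0) ∧
    -- the directrix vector of the dual set equals β
    (∀ i, (Finset.univ.sup fun j => (newtonDualWith β (g j)).degreeOf i) = β i) ∧
    -- the dual of the dual set is the original set
    (∀ j, newtonDualWith β (newtonDualWith β (g j)) = g j) := by
  classical
  have hsupp : ∀ j, ∀ a ∈ (g j).support, ∀ i, a i ≤ β i := by
    intro j a ha i
    have h1 : a i ≤ (g j).degreeOf i := by
      rw [MvPolynomial.degreeOf_eq_sup]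
      exact Finset.le_sup (f := fun (mo : Fin (n+1) →₀ ℕ) => mo i) ha
    have h2 : (g j).degreeOf i ≤ β i := by
      rw [hβ]
      exact Finset.le_sup (f := fun j => (g j).degreeOf i) (Finset.mem_univ j)
    omega
  have hdsupp : ∀ j, (newtonDualWith β (g j)).support
      = (g j).support.image (NewtonAux.refl β) := fun j => NewtonAux.support_dual (hsupp j)
  have hdne : ∀ j, newtonDualWith β (g j) ≠ 0 :=
    fun j => NewtonAux.dual_ne_zero (hsupp j) (hne j)
  have hdd : ∀ j, newtonDualWith β (newtonDualWith β (g j)) = g j :=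
    fun j => NewtonAux.dual_dual (hsupp j)
  have hdeg : ∀ j, ∀ a ∈ (g j).support, a.degree = d := by
    intro j a ha
    have := hhom j (MvPolynomial.mem_support_iff.mp ha)
    rwa [show (1 : Fin (n+1) → ℕ) = fun _ => 1 from rfl, ← Finsupp.degree_eq_weight_one] at this
  have exists0 : ∀ i, ∃ j, ∃ a ∈ (g j).support, a i = 0 := by
    intro i
    by_contra hcon
    push_neg at hcon
    have hX : ∀ j, (X i : MvPolynomial (Fin (n+1)) k) ∣ g j := by
      intro j
      exact NewtonAux.X_dvd_of_support i (fun a ha => hcon j a ha)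
    exact ((NewtonAux.prime_X (k := k) i).2.1) (hgcd _ hX)
  have attain : ∀ i, ∃ j, ∃ a ∈ (g j).support, a i = β i := by
    intro i
    obtain ⟨j, -, hj⟩ := Finset.exists_mem_eq_sup Finset.univ Finset.univ_nonempty
      (fun j => (g j).degreeOf i)
    obtain ⟨a, ha, ha2⟩ := Finset.exists_mem_eq_sup (g j).support
      (MvPolynomial.support_nonempty.mpr (hne j)) (fun a => a i)
    refine ⟨j, a, ha, ?_⟩
    rw [hβ, hj, MvPolynomial.degreeOf_eq_sup, ha2]
  have hnotX : ∀ i, ∃ j, ¬ (X i : MvPolynomial (Fin (n+1)) k) ∣ newtonDualWith β (g j) := by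
    intro i
    obtain ⟨j, a, ha, hai⟩ := attain i
    refine ⟨j, NewtonAux.not_X_dvd_of_exists i (a := NewtonAux.refl β a) ?_ ?_⟩
    · rw [hdsupp j]; exact Finset.mem_image_of_mem _ ha
    · rw [NewtonAux.refl_apply, hai, Nat.sub_self]
  have hβpos : ∀ i, 0 < β i := by
    intro i
    obtain ⟨j, hj⟩ := hvar i
    have : (g j).degreeOf i ≤ β i := by
      rw [hβ]
      exact Finset.le_sup (f := fun j => (g j).degreeOf i) (Finset.mem_univ j)
    omega
  have part2 : ∀ i, ∃ j, (newtonDualWith β (g j)).degreeOf i ≠ 0 := by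
    intro i
    obtain ⟨j, a, ha, hai⟩ := exists0 i
    refine ⟨j, ?_⟩
    have hmem : NewtonAux.refl β a ∈ (newtonDualWith β (g j)).support := by
      rw [hdsupp j]; exact Finset.mem_image_of_mem _ ha
    have h1 : (NewtonAux.refl β a) i ≤ (newtonDualWith β (g j)).degreeOf i := by
      rw [MvPolynomial.degreeOf_eq_sup]
      exact Finset.le_sup (f := fun (mo : Fin (n+1) →₀ ℕ) => mo i) hmem
    have h2 : (NewtonAux.refl β a) i = β i := by
      rw [NewtonAux.refl_apply, hai, Nat.sub_zero]
    have := hβpos i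
    omega
  have part3 : ∀ i, (Finset.univ.sup fun j => (newtonDualWith β (g j)).degreeOf i) = β i := by
    intro i
    apply le_antisymm
    · apply Finset.sup_le
      intro j _
      rw [MvPolynomial.degreeOf_eq_sup]
      apply Finset.sup_le
      intro b hb
      rw [hdsupp j] at hb
      obtain ⟨a, -, rfl⟩ := Finset.mem_image.mp hb
      simpa using Nat.sub_le _ _
    · obtain ⟨j, a, ha, hai⟩ := exists0 i
      have hmem : NewtonAux.refl β a ∈ (newtonDualWith β (g j)).support := by
        rw [hdsupp j]; exact Finset.mem_image_of_mem _ ha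
      have h1 : (NewtonAux.refl β a) i ≤ (newtonDualWith β (g j)).degreeOf i := by
        rw [MvPolynomial.degreeOf_eq_sup]
        exact Finset.le_sup (f := fun (mo : Fin (n+1) →₀ ℕ) => mo i) hmem
      have h2 : (NewtonAux.refl β a) i = β i := by
        rw [NewtonAux.refl_apply, hai, Nat.sub_zero]
      have h3 : (newtonDualWith β (g j)).degreeOf i
          ≤ Finset.univ.sup fun j => (newtonDualWith β (g j)).degreeOf i :=
        Finset.le_sup (f := fun j => (newtonDualWith β (g j)).degreeOf i) (Finset.mem_univ j)
      omega
  have part1 : ∀ p : MvPolynomial (Fin (n + 1)) k,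
      (∀ j, p ∣ newtonDualWith β (g j)) → IsUnit p := by
    intro p hp
    have hβS : ∀ i, β i + d ≤ ∑ l, β l := by
      intro i
      obtain ⟨j, a, ha, hai⟩ := exists0 i
      have h1 : ∀ l, a l ≤ β l := hsupp j a ha
      have h2 : a.degree = d := hdeg j a ha
      rw [NewtonAux.degree_eq_sum] at h2
      have h3 : (∑ l ∈ Finset.univ.erase i, a l) + a i = ∑ l, a l :=
        Finset.sum_erase_add _ _ (Finset.mem_univ i)
      have h4 : (∑ l ∈ Finset.univ.erase i, β l) + β i = ∑ l, β l :=
        Finset.sum_erase_add _ _ (Finset.mem_univ i)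
      have h5 : (∑ l ∈ Finset.univ.erase i, a l) ≤ ∑ l ∈ Finset.univ.erase i, β l :=
        Finset.sum_le_sum (fun l _ => h1 l)
      omega
    set e := (∑ l, β l) - d with he
    have hβe : ∀ i, β i ≤ e := by
      intro i; have := hβS i; omega
    have hdhom : ∀ j, (newtonDualWith β (g j)).IsHomogeneous e := by
      intro j a ha
      rw [show (1 : Fin (n+1) → ℕ) = fun _ => 1 from rfl, ← Finsupp.degree_eq_weight_one]
      have hmem : a ∈ (newtonDualWith β (g j)).support := MvPolynomial.mem_support_iff.mpr ha
      rw [hdsupp j] at hmem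
      obtain ⟨b, hb, rfl⟩ := Finset.mem_image.mp hmem
      have h1 : ∀ l, b l ≤ β l := hsupp j b hb
      have h2 : b.degree = d := hdeg j b hb
      rw [NewtonAux.degree_eq_sum] at h2
      rw [NewtonAux.degree_eq_sum]
      have h3 : ∑ l, ((NewtonAux.refl β b) l) = (∑ l, β l) - ∑ l, b l := by
        simp only [NewtonAux.refl_apply]
        rw [Finset.sum_tsub_distrib _ (fun l _ => h1 l)]
      rw [h3, h2]
    have hpne : p ≠ 0 := by
      intro h0
      have := hp 0
      rw [h0] at this
      exact (hdne 0) (zero_dvd_iff.mp this)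
    have hphom : p.IsHomogeneous p.totalDegree :=
      NewtonAux.isHomogeneous_of_dvd (hdhom 0) (hdne 0) (hp 0)
    set γ : Fin (n+1) → ℕ := fun i => p.degreeOf i with hγ
    have hpsupp : ∀ a ∈ p.support, ∀ i, a i ≤ γ i := by
      intro a ha i
      show a i ≤ p.degreeOf i
      rw [MvPolynomial.degreeOf_eq_sup]
      exact Finset.le_sup (f := fun (mo : Fin (n+1) →₀ ℕ) => mo i) ha
    have hγle : ∀ i, γ i ≤ p.totalDegree := by
      intro i
      show p.degreeOf i ≤ p.totalDegree
      rw [MvPolynomial.degreeOf_eq_sup]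
      apply Finset.sup_le
      intro a ha
      exact le_trans (Finsupp.le_degree i a) (MvPolynomial.le_totalDegree ha)
    set revp := newtonDualWith γ p with hrev
    have hdsupple : ∀ j, ∀ a ∈ (newtonDualWith β (g j)).support, ∀ i, a i ≤ β i := by
      intro j a ha i
      rw [hdsupp j] at ha
      obtain ⟨b, -, rfl⟩ := Finset.mem_image.mp ha
      simpa using Nat.sub_le _ _
    have hkey : ∀ j, aeval (magnus k (n+1)) (newtonDualWith β (g j))
        = monomial (Finsupp.equivFunOnFinite.symm fun i => (fun _ => e) i - β i) 1 * g j := by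
      intro j
      rw [NewtonAux.aeval_magnus_homog (hdhom j),
        NewtonAux.dual_shift (hdsupple j) hβe, hdd j]
    have hkeyp : aeval (magnus k (n+1)) p
        = monomial (Finsupp.equivFunOnFinite.symm
            fun i => (fun _ => p.totalDegree) i - γ i) 1 * revp := by
      rw [NewtonAux.aeval_magnus_homog hphom, NewtonAux.dual_shift hpsupp hγle]
    have hdvd1 : ∀ j, revp ∣
        monomial (Finsupp.equivFunOnFinite.symm fun i => (fun _ => e) i - β i) 1 * g j := by
      intro j
      rw [← hkey j]
      obtain ⟨w, hw⟩ := hp j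
      rw [hw, map_mul, hkeyp]
      exact dvd_mul_of_dvd_left (dvd_mul_left revp _) _
    have hrevX : ∀ i, ¬ (X i : MvPolynomial (Fin (n+1)) k) ∣ revp := by
      intro i
      obtain ⟨a, ha, ha2⟩ := Finset.exists_mem_eq_sup p.support
        (MvPolynomial.support_nonempty.mpr hpne) (fun a => a i)
      have hai : a i = γ i := by
        show a i = p.degreeOf i
        rw [MvPolynomial.degreeOf_eq_sup, ha2]
      refine NewtonAux.not_X_dvd_of_exists i (a := NewtonAux.refl γ a) ?_ ?_
      · rw [hrev, NewtonAux.support_dual hpsupp]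
        exact Finset.mem_image_of_mem _ ha
      · rw [NewtonAux.refl_apply, hai, Nat.sub_self]
    have hrevdvd : ∀ j, revp ∣ g j :=
      fun j => NewtonAux.dvd_of_dvd_monomial_mul hrevX (hdvd1 j)
    have hrevunit : IsUnit revp := hgcd revp hrevdvd
    have hrevne : revp ≠ 0 := hrevunit.ne_zero
    obtain ⟨v, hv⟩ := hrevunit.exists_right_inv
    have hvne : v ≠ 0 := by
      intro h0; rw [h0, mul_zero] at hv; exact one_ne_zero hv.symm
    have h1hom : (revp * v).IsHomogeneous 0 := by
      rw [hv]; exact isHomogeneous_one _ _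
    have htd0 : revp.totalDegree = 0 := by
      have := NewtonAux.top_eq_of_homog hrevne hvne h1hom; omega
    have hsupprev : revp.support = {0} := by
      have hsub : revp.support ⊆ {0} := by
        intro a ha
        have h1 : a.degree ≤ revp.totalDegree := MvPolynomial.le_totalDegree ha
        rw [htd0, Nat.le_zero, Finsupp.degree_eq_zero_iff] at h1
        rw [h1]; exact Finset.mem_singleton_self 0
      rcases Finset.subset_singleton_iff.mp hsub with h | h
      · exact absurd (MvPolynomial.support_eq_empty.mp h) hrevne
      · exact h
    have hpeq : p = monomial (NewtonAux.refl γ 0) (coeff 0 revp) := by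
      have h2 := NewtonAux.dual_dual hpsupp
      rw [← h2, NewtonAux.newtonDualWith_eq γ (newtonDualWith γ p), ← hrev, hsupprev,
        Finset.sum_singleton]
    have hc0 : coeff 0 revp ≠ 0 := by
      have : (0 : Fin (n+1) →₀ ℕ) ∈ revp.support := by
        rw [hsupprev]; exact Finset.mem_singleton_self 0
      exact MvPolynomial.mem_support_iff.mp this
    have hγ0 : ∀ i, γ i = 0 := by
      intro i
      by_contra hne0
      obtain ⟨j, hj⟩ := hnotX i
      apply hj
      refine dvd_trans ?_ (hp j)
      rw [hpeq]
      refine X_dvd_monomial.mpr (Or.inr ?_)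
      rw [NewtonAux.refl_apply]
      simpa using hne0
    have hfin : p = C (coeff 0 revp) := by
      rw [hpeq]
      have h0 : NewtonAux.refl γ 0 = 0 := by
        ext i; rw [NewtonAux.refl_apply, hγ0 i]; rfl
      rw [h0, monomial_zero']
    rw [hfin]
    exact (isUnit_iff_ne_zero.mpr hc0).map C
  exact ⟨part1, part2, part3, hdd⟩
end

section
/- Let g_0,…,g_m ⊂ k[x_0,…,x_n] be forms of degree d ≥ 1 and let h_0,…,h_n ⊂ k[x_0,…,x_n] be n+1 forms of a common degree s ≥ 1, with n ≥ 1. Let α be the directrix vector of the set {h_0,…,h_n}, let ĥ denote its Newton dual set, and let β be the directrix vector of the composed set {g_0(h),…,g_m(h)} (each of degree ds). Then for every j, g_j(ĥ_0,…,ĥ_n) · x_0^{dα_0 − β_0} ⋯ x_n^{dα_n − β_n} is a well-defined identity in the Laurent polynomial ring: x^{ds𝟙 − dα} · g_j(ĥ) = x^{ds𝟙 − β} · (g(h))^_j, i.e., g_j(ĥ) = x^{dα−β} · (g(h))^_j whenever dα_i ≥ β_i for all i. -/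
open MvPolynomial Finset

section Aux
variable {k : Type*} [Field k] {N : ℕ}

lemma prod_X_pow_ne_zero (a : Fin N → ℕ) :
    (∏ i, (X i : MvPolynomial (Fin N) k) ^ a i) ≠ 0 := by
  apply Finset.prod_ne_zero_iff.mpr
  intro i _
  exact pow_ne_zero _ (X_ne_zero _)

lemma magnus_prod_pow (a : Fin N → ℕ) :
    ∏ i, (magnus k N i) ^ a i = ∏ i, (X i : MvPolynomial (Fin N) k) ^ ((∑ j, a j) - a i) := by
  apply mul_left_cancel₀ (prod_X_pow_ne_zero a)
  rw [← Finset.prod_mul_distrib, ← Finset.prod_mul_distrib]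
  have h1 : ∀ i : Fin N, (X i : MvPolynomial (Fin N) k) ^ a i * magnus k N i ^ a i
      = (∏ j, (X j : MvPolynomial (Fin N) k)) ^ a i := by
    intro i
    rw [← mul_pow, magnus, Finset.mul_prod_erase _ _ (Finset.mem_univ i)]
  have h2 : ∀ i : Fin N, (X i : MvPolynomial (Fin N) k) ^ a i *
      (X i : MvPolynomial (Fin N) k) ^ ((∑ j, a j) - a i)
      = (X i : MvPolynomial (Fin N) k) ^ (∑ j, a j) := by
    intro i
    rw [← pow_add, Nat.add_sub_cancel' (Finset.single_le_sum (fun j _ => Nat.zero_le (a j))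
      (Finset.mem_univ i))]
  simp_rw [h1, h2, Finset.prod_pow_eq_pow_sum, ← Finset.prod_pow]

lemma sum_eq_of_mem_support {e : ℕ} {f : MvPolynomial (Fin N) k}
    (hf : f.IsHomogeneous e) {a : Fin N →₀ ℕ} (ha : a ∈ f.support) :
    ∑ i, a i = e := by
  have h := hf (MvPolynomial.mem_support_iff.mp ha)
  rw [← h, Finsupp.weight_apply, Finsupp.sum_fintype]
  · simp
  · intro i; simp

lemma aeval_magnus {e : ℕ} {f : MvPolynomial (Fin N) k}
    (hf : f.IsHomogeneous e) {α : Fin N → ℕ}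
    (hα1 : ∀ a ∈ f.support, ∀ i, a i ≤ α i) (hα2 : ∀ i, α i ≤ e) :
    aeval (magnus k N) f = (∏ i, (X i : MvPolynomial (Fin N) k) ^ (e - α i)) *
      newtonDualWith α f := by
  conv_lhs => rw [← support_sum_monomial_coeff f]
  rw [map_sum, newtonDualWith, Finset.mul_sum]
  apply Finset.sum_congr rfl
  intro a ha
  rw [aeval_monomial, monomial_eq]
  rw [Finsupp.prod_fintype _ _ (fun i => pow_zero _),
    Finsupp.prod_fintype _ _ (fun i => pow_zero _)]
  simp only [Finsupp.equivFunOnFinite_symm_apply_apply]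
  rw [magnus_prod_pow, sum_eq_of_mem_support hf ha]
  rw [mul_left_comm, ← Finset.prod_mul_distrib]
  have : ∀ i : Fin N, (X i : MvPolynomial (Fin N) k) ^ (e - α i) *
      (X i : MvPolynomial (Fin N) k) ^ (α i - a i)
      = (X i : MvPolynomial (Fin N) k) ^ (e - a i) := by
    intro i
    rw [← pow_add, Nat.sub_add_sub_cancel (hα2 i) (hα1 a ha i)]
  simp_rw [this]
  rfl

lemma aeval_mul_homogeneous {d : ℕ} {g : MvPolynomial (Fin N) k}
    (hg : g.IsHomogeneous d) (P : MvPolynomial (Fin N) k)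
    (y : Fin N → MvPolynomial (Fin N) k) :
    aeval (fun ℓ => P * y ℓ) g = P ^ d * aeval y g := by
  conv_lhs => rw [← support_sum_monomial_coeff g]
  conv_rhs => rw [← support_sum_monomial_coeff g]
  rw [map_sum, map_sum, Finset.mul_sum]
  apply Finset.sum_congr rfl
  intro a ha
  rw [aeval_monomial, aeval_monomial,
    Finsupp.prod_fintype _ _ (fun i => pow_zero _),
    Finsupp.prod_fintype _ _ (fun i => pow_zero _)]
  simp_rw [mul_pow, Finset.prod_mul_distrib, Finset.prod_pow_eq_pow_sum,
    sum_eq_of_mem_support hg ha]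
  ring

end Aux

theorem eval_newtonDualSet_comp {k : Type*} [Field k] {n m d s : ℕ}
    (hn : 1 ≤ n) (hd : 1 ≤ d) (hs : 1 ≤ s)
    (g : Fin (m + 1) → MvPolynomial (Fin (n + 1)) k)
    (hgne : ∀ j, g j ≠ 0) (hghom : ∀ j, (g j).IsHomogeneous d)
    (h : Fin (n + 1) → MvPolynomial (Fin (n + 1)) k)
    (hhne : ∀ ℓ, h ℓ ≠ 0) (hhhom : ∀ ℓ, (h ℓ).IsHomogeneous s)
    (α : Fin (n + 1) → ℕ)
    (hα : ∀ i, α i = Finset.univ.sup fun ℓ => (h ℓ).degreeOf i)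
    (β : Fin (n + 1) → ℕ)
    (hβ : ∀ i, β i = Finset.univ.sup fun j => (aeval h (g j)).degreeOf i) :
    ∀ j, (∏ i, X i ^ (d * s - d * α i)) *
          aeval (fun ℓ => newtonDualWith α (h ℓ)) (g j) =
        (∏ i, X i ^ (d * s - β i)) * newtonDualWith β (aeval h (g j)) := by
  intro j
  set F : MvPolynomial (Fin (n + 1)) k := aeval h (g j) with hF
  have hFhom : F.IsHomogeneous (d * s) := by
    rw [mul_comm]
    exact (hghom j).aeval h hhhom
  -- β bounds
  have hβ1 : ∀ a ∈ F.support, ∀ i, a i ≤ β i := by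
    intro a ha i
    rw [hβ]
    exact le_trans (monomial_le_degreeOf i ha)
      (Finset.le_sup (f := fun j => (aeval h (g j)).degreeOf i) (Finset.mem_univ j))
  have hβ2 : ∀ i, β i ≤ d * s := by
    intro i
    rw [hβ]
    apply Finset.sup_le
    intro j' _
    calc (aeval h (g j')).degreeOf i ≤ (aeval h (g j')).totalDegree :=
          degreeOf_le_totalDegree _ i
      _ ≤ d * s := by
          rw [mul_comm]
          exact ((hghom j').aeval h hhhom).totalDegree_le
  -- α bounds
  have hα1 : ∀ ℓ, ∀ a ∈ (h ℓ).support, ∀ i, a i ≤ α i := by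
    intro ℓ a ha i
    rw [hα]
    exact le_trans (monomial_le_degreeOf i ha)
      (Finset.le_sup (f := fun ℓ => (h ℓ).degreeOf i) (Finset.mem_univ ℓ))
  have hα2 : ∀ i, α i ≤ s := by
    intro i
    rw [hα]
    apply Finset.sup_le
    intro ℓ _
    exact le_trans (degreeOf_le_totalDegree _ i) (hhhom ℓ).totalDegree_le
  -- magnus identity applied to F
  have key1 : aeval (magnus k (n + 1)) F =
      (∏ i, (X i : MvPolynomial (Fin (n + 1)) k) ^ (d * s - β i)) * newtonDualWith β F :=
    aeval_magnus hFhom hβ1 hβ2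
  -- composition
  have key2 : aeval (magnus k (n + 1)) F =
      aeval (fun ℓ => aeval (magnus k (n + 1)) (h ℓ)) (g j) := by
    rw [hF, comp_aeval_apply]
  -- magnus identity on each h ℓ
  set P : MvPolynomial (Fin (n + 1)) k := ∏ i, (X i : MvPolynomial (Fin (n + 1)) k) ^ (s - α i)
    with hP
  have key3 : (fun ℓ => aeval (magnus k (n + 1)) (h ℓ)) =
      fun ℓ => P * newtonDualWith α (h ℓ) := by
    funext ℓ
    exact aeval_magnus (hhhom ℓ) (hα1 ℓ) hα2
  have key4 : aeval (fun ℓ => P * newtonDualWith α (h ℓ)) (g j) =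
      P ^ d * aeval (fun ℓ => newtonDualWith α (h ℓ)) (g j) :=
    aeval_mul_homogeneous (hghom j) P _
  have hPd : P ^ d = ∏ i, (X i : MvPolynomial (Fin (n + 1)) k) ^ (d * s - d * α i) := by
    rw [hP, ← Finset.prod_pow]
    apply Finset.prod_congr rfl
    intro i _
    rw [← pow_mul, Nat.sub_mul, Nat.mul_comm s d, Nat.mul_comm (α i) d]
  rw [← hPd, ← key4, ← key3, ← key2, key1]
end
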